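/- Assume (A1) r has all coordinates strictly positive and (A2) M_{ij} ≤ 0 for all i ≠ j. Then there exists a constant B > 0 such that for all ε ∈ (0,1] and all t ≥ 0, the solution θ^{(ε)} of the DLN ODE with initial condition θ_i^{(ε)}(0) = C_i ε^{k_i} satisfies ‖θ^{(ε)}(t)‖ ≤ B, where ‖·‖ is the Euclidean norm on ℝ^d. -/

import Mathlib

open Matrix Set

lemma dln_pos (d : ℕ) (M : Matrix (Fin d) (Fin d) ℝ) (r : Fin d → ℝ)
    (θ : ℝ → Fin d → ℝ)
    (h0 : ∀ i, 0 < θ 0 i)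
    (hode : ∀ t ≥ (0:ℝ), ∀ i,
      HasDerivAt (fun τ => θ τ i) (θ t i * (r i - (M *ᵥ θ t) i)) t) :
    ∀ t ≥ (0:ℝ), ∀ i, 0 < θ t i := by
  intro T hT i
  by_contra hneg
  push_neg at hneg
  have hcont : ∀ j, ContinuousOn (fun t => θ t j) (Icc 0 T) := by
    intro j t ht
    exact ((hode t ht.1 j).continuousAt).continuousWithinAt
  have hgcont : ContinuousOn (fun t => fun j => r j - (M *ᵥ θ t) j) (Icc 0 T) := by
    apply continuousOn_pi.2
    intro j
    apply ContinuousOn.sub continuousOn_const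
    simp only [mulVec, dotProduct]
    exact continuousOn_finset_sum _ fun m _ => (continuousOn_const.mul (hcont m))
  obtain ⟨K, hK⟩ := isCompact_Icc.exists_bound_of_continuousOn hgcont
  set K' := max K 0 with hK'
  have hKbound : ∀ t ∈ Icc (0:ℝ) T, -K' ≤ r i - (M *ᵥ θ t) i := by
    intro t ht
    have h2 : |r i - (M *ᵥ θ t) i| ≤ K := by
      calc |r i - (M *ᵥ θ t) i| ≤ ‖fun j => r j - (M *ᵥ θ t) j‖ := by
            simpa using norm_le_pi_norm (fun j => r j - (M *ᵥ θ t) j) i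
        _ ≤ K := hK t ht
    have h3 := (abs_le.1 h2).1
    have h4 : K ≤ K' := le_max_left _ _
    linarith
  set S : Set ℝ := Icc 0 T ∩ (fun t => θ t i) ⁻¹' Iic 0 with hS
  have hSne : S.Nonempty := ⟨T, ⟨hT, le_refl T⟩, hneg⟩
  have hSclosed : IsClosed S :=
    ContinuousOn.preimage_isClosed_of_isClosed (hcont i) isClosed_Icc isClosed_Iic
  have hSbdd : BddBelow S := ⟨0, fun x hx => hx.1.1⟩
  set t₀ := sInf S with ht₀
  have ht₀mem : t₀ ∈ S := hSclosed.csInf_mem hSne hSbdd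
  have ht₀nonneg : 0 ≤ t₀ := ht₀mem.1.1
  have ht₀T : t₀ ≤ T := ht₀mem.1.2
  have hθt₀ : θ t₀ i ≤ 0 := ht₀mem.2
  have ht₀pos : 0 < t₀ := by
    rcases lt_or_eq_of_le ht₀nonneg with h | h
    · exact h
    · exfalso; rw [← h] at hθt₀; exact absurd hθt₀ (not_le.2 (h0 i))
  have hbefore : ∀ s ∈ Ico (0:ℝ) t₀, 0 < θ s i := by
    intro s hs
    by_contra hc
    push_neg at hc
    have : s ∈ S := ⟨⟨hs.1, le_trans hs.2.le ht₀T⟩, hc⟩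
    exact absurd (csInf_le hSbdd this) (not_le.2 hs.2)
  -- f t = θ t i * exp (K' t) is monotone on [0, t₀]
  set f : ℝ → ℝ := fun t => θ t i * Real.exp (K' * t) with hf
  have hderiv : ∀ x ∈ Ioo (0:ℝ) t₀, HasDerivAt f
      ((θ x i * (r i - (M *ᵥ θ x) i)) * Real.exp (K' * x)
        + θ x i * (K' * Real.exp (K' * x))) x := by
    intro x hx
    have h1 := hode x hx.1.le i
    have h2 : HasDerivAt (fun t => Real.exp (K' * t)) (K' * Real.exp (K' * x)) x := by
      have := ((hasDerivAt_id x).const_mul K').exp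
      simpa [mul_comm] using this
    exact h1.mul h2
  have hmono : MonotoneOn f (Icc 0 t₀) := by
    apply monotoneOn_of_deriv_nonneg (convex_Icc 0 t₀)
    · exact ((hcont i).mono (Icc_subset_Icc le_rfl ht₀T)).mul
        (Real.continuous_exp.comp (continuous_const.mul continuous_id)).continuousOn
    · intro x hx
      rw [interior_Icc] at hx
      exact (hderiv x hx).differentiableAt.differentiableWithinAt
    · intro x hx
      rw [interior_Icc] at hx
      rw [(hderiv x hx).deriv]
      have hθpos : 0 < θ x i := hbefore x ⟨hx.1.le, hx.2⟩
      have hg : -K' ≤ r i - (M *ᵥ θ x) i :=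
        hKbound x ⟨hx.1.le, le_trans hx.2.le ht₀T⟩
      have hexp : 0 < Real.exp (K' * x) := Real.exp_pos _
      have key : 0 ≤ θ x i * ((r i - (M *ᵥ θ x) i) + K') * Real.exp (K' * x) :=
        mul_nonneg (mul_nonneg hθpos.le (by linarith)) hexp.le
      nlinarith [key]
  have h01 : f 0 ≤ f t₀ := hmono ⟨le_rfl, ht₀nonneg⟩ ⟨ht₀nonneg, le_rfl⟩ ht₀nonneg
  have hf0 : 0 < f 0 := by simpa [hf] using h0 i
  have hft₀ : f t₀ ≤ 0 := mul_nonpos_of_nonpos_of_nonneg hθt₀ (Real.exp_pos _).le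
  linarith


-- quadratic form identity: ∑_l (Xv)_l² = ∑_i ∑_j M_ij v_i v_j
lemma quad_expand (n d : ℕ) (X : Matrix (Fin n) (Fin d) ℝ) (v : Fin d → ℝ) :
    ∑ l, (∑ j, X l j * v j) ^ 2 = ∑ i, ∑ j, (∑ l, X l i * X l j) * v i * v j := by
  have : ∀ l, (∑ j, X l j * v j) ^ 2 = ∑ i, ∑ j, (X l i * v i) * (X l j * v j) := by
    intro l
    rw [sq, Finset.sum_mul_sum]
  rw [Finset.sum_congr rfl fun l _ => this l]
  rw [Finset.sum_comm]
  apply Finset.sum_congr rfl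
  intro i _
  rw [Finset.sum_comm]
  apply Finset.sum_congr rfl
  intro j _
  rw [Finset.sum_mul, Finset.sum_mul]
  apply Finset.sum_congr rfl
  intro l _
  ring

lemma quad_lower (n d : ℕ) (hd : 0 < d) (X : Matrix (Fin n) (Fin d) ℝ) (y : Fin n → ℝ)
    (hA1 : ∀ i, 0 < (Xᵀ *ᵥ y) i)
    (hA2 : ∀ i j, i ≠ j → (Xᵀ * X) i j ≤ 0) :
    ∃ lam > (0:ℝ), ∀ v : Fin d → ℝ,
      lam * (∑ i, (v i) ^ 2) ≤ ∑ l, (∑ j, X l j * v j) ^ 2 := by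
  -- F on EuclideanSpace
  set F : EuclideanSpace ℝ (Fin d) → ℝ := fun v => ∑ l, (∑ j, X l j * v j) ^ 2 with hF
  have hFcont : Continuous F := by
    apply continuous_finset_sum
    intro l _
    exact (continuous_finset_sum _ fun j _ =>
      (continuous_const.mul ((continuous_apply j).comp (PiLp.continuous_ofLp 2 _)))).pow 2
  have hsph : IsCompact (Metric.sphere (0 : EuclideanSpace ℝ (Fin d)) 1) := isCompact_sphere _ _
  haveI : Nonempty (Fin d) := ⟨⟨0, hd⟩⟩
  haveI : Nontrivial (EuclideanSpace ℝ (Fin d)) := inferInstance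
  have hne : (Metric.sphere (0 : EuclideanSpace ℝ (Fin d)) 1).Nonempty := by
    apply NormedSpace.sphere_nonempty.2
    norm_num
  obtain ⟨v₀, hv₀mem, hv₀min⟩ := hsph.exists_isMinOn hne hFcont.continuousOn
  set lam := F v₀ with hlam
  -- norm of v₀ is 1
  have hv₀norm : ‖v₀‖ = 1 := by simpa using hv₀mem
  have hsum1 : ∑ i, (v₀ i) ^ 2 = 1 := by
    have h := EuclideanSpace.norm_eq v₀
    rw [hv₀norm] at h
    have h2 : (1:ℝ) = Real.sqrt (∑ i, (v₀ i)^2) := by simpa [Real.norm_eq_abs, sq_abs] using h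
    have h3 : Real.sqrt (∑ i, (v₀ i)^2) ^ 2 = ∑ i, (v₀ i)^2 :=
      Real.sq_sqrt (Finset.sum_nonneg fun i _ => sq_nonneg (v₀ i))
    nlinarith [h3, h2]
  -- lam > 0
  have hlampos : 0 < lam := by
    rcases lt_or_eq_of_le (Finset.sum_nonneg fun l _ => sq_nonneg (∑ j, X l j * v₀ j)) with h | h
    · exact h
    exfalso
    -- F v₀ = 0 : X v₀ = 0
    have hXv : ∀ l, ∑ j, X l j * v₀ j = 0 := by
      intro l
      have := (Finset.sum_eq_zero_iff_of_nonneg (fun l _ => sq_nonneg (∑ j, X l j * v₀ j))).1 h.symm l (Finset.mem_univ l)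
      exact pow_eq_zero_iff (by norm_num) |>.1 this
    -- w = |v₀| also in kernel
    set w : Fin d → ℝ := fun i => |v₀ i| with hw
    have hQw : ∑ l, (∑ j, X l j * w j) ^ 2 ≤ 0 := by
      rw [quad_expand]
      have hQv : ∑ i, ∑ j, (∑ l, X l i * X l j) * v₀ i * v₀ j = 0 := by
        rw [← quad_expand]; exact h.symm
      rw [← hQv]
      apply Finset.sum_le_sum
      intro i _
      apply Finset.sum_le_sum
      intro j _
      rcases eq_or_ne i j with rfl | hij
      · simp [hw, mul_assoc, ← sq, sq_abs]
      · have hMij : (∑ l, X l i * X l j) ≤ 0 := by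
          have := hA2 i j hij
          simpa [Matrix.mul_apply, Matrix.transpose_apply] using this
        have habs : v₀ i * v₀ j ≤ w i * w j := by
          rw [hw]; calc v₀ i * v₀ j ≤ |v₀ i * v₀ j| := le_abs_self _
            _ = |v₀ i| * |v₀ j| := abs_mul _ _
        rw [mul_assoc, mul_assoc]
        exact mul_le_mul_of_nonpos_left habs hMij
    have hXw : ∀ l, ∑ j, X l j * w j = 0 := by
      intro l
      have h0 : ∑ l, (∑ j, X l j * w j) ^ 2 = 0 :=
        le_antisymm hQw (Finset.sum_nonneg fun l _ => sq_nonneg _)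
      have := (Finset.sum_eq_zero_iff_of_nonneg (fun l _ => sq_nonneg (∑ j, X l j * w j))).1 h0 l (Finset.mem_univ l)
      exact pow_eq_zero_iff (by norm_num) |>.1 this
    -- ⟨r, w⟩ = ⟨y, Xw⟩ = 0 and r > 0, w ≥ 0 ⇒ w = 0
    have hrw : ∑ i, (Xᵀ *ᵥ y) i * w i = 0 := by
      have : ∑ i, (Xᵀ *ᵥ y) i * w i = ∑ l, y l * (∑ j, X l j * w j) := by
        simp only [Matrix.mulVec, dotProduct, Matrix.transpose_apply,
          Finset.sum_mul, Finset.mul_sum]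
        rw [Finset.sum_comm]
        exact Finset.sum_congr rfl fun l _ => Finset.sum_congr rfl fun i _ => by ring
      rw [this]
      simp [hXw]
    have hwzero : ∀ i, w i = 0 := by
      intro i
      have hnn : ∀ i ∈ Finset.univ, (0:ℝ) ≤ (Xᵀ *ᵥ y) i * w i :=
        fun i _ => mul_nonneg (hA1 i).le (abs_nonneg _)
      have := (Finset.sum_eq_zero_iff_of_nonneg hnn).1 hrw i (Finset.mem_univ i)
      rcases mul_eq_zero.1 this with h | h
      · exact absurd h (ne_of_gt (hA1 i))
      · exact h
    have : ∑ i, (v₀ i)^2 = 0 := by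
      apply Finset.sum_eq_zero
      intro i _
      have := hwzero i
      rw [hw] at this
      simp only [abs_eq_zero] at this
      simp [this]
    rw [hsum1] at this
    norm_num at this
  refine ⟨lam, hlampos, ?_⟩
  intro v
  rcases eq_or_ne (∑ i, (v i)^2) 0 with hv | hv
  · rw [hv, mul_zero]
    exact Finset.sum_nonneg fun l _ => sq_nonneg _
  · have hvpos : 0 < ∑ i, (v i)^2 :=
      lt_of_le_of_ne (Finset.sum_nonneg fun i _ => sq_nonneg _) (Ne.symm hv)
    set c := Real.sqrt (∑ i, (v i)^2) with hc
    have hcpos : 0 < c := Real.sqrt_pos.2 hvpos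
    have hc2 : c ^ 2 = ∑ i, (v i)^2 := Real.sq_sqrt hvpos.le
    set u : EuclideanSpace ℝ (Fin d) := WithLp.toLp 2 (fun i => v i / c) with hu
    have husum : ∑ i, (u i)^2 = 1 := by
      simp only [hu, PiLp.toLp_apply, div_pow]
      rw [← Finset.sum_div, ← hc2]
      field_simp
    have humem : u ∈ Metric.sphere (0 : EuclideanSpace ℝ (Fin d)) 1 := by
      simp only [Metric.mem_sphere, dist_zero_right]
      rw [EuclideanSpace.norm_eq]
      simp only [Real.norm_eq_abs, sq_abs]
      rw [husum]
      exact Real.sqrt_one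
    have hFu : lam ≤ F u := hv₀min humem
    have hFv : F (WithLp.toLp 2 (fun i => v i)) = c^2 * F u := by
      simp only [hF]
      rw [Finset.mul_sum]
      apply Finset.sum_congr rfl
      intro l _
      have : ∑ j, X l j * u j = (∑ j, X l j * v j) / c := by
        rw [Finset.sum_div]
        apply Finset.sum_congr rfl
        intro j _
        simp [hu, mul_div_assoc]
      rw [this]
      field_simp
    calc lam * ∑ i, (v i)^2 = c^2 * lam := by rw [hc2]; ring
      _ ≤ c^2 * F u := by nlinarith [hFu, sq_nonneg c]
      _ = F (WithLp.toLp 2 (fun i => v i)) := hFv.symm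
      _ = ∑ l, (∑ j, X l j * v j)^2 := rfl

/-- Lemma 2: Under (A1) and (A2), the trajectories of the DLN ODE started
from `θᵢ(0) = Cᵢ ε^{kᵢ}` are bounded in Euclidean norm, uniformly over `ε ∈ (0,1]` and
`t ≥ 0`. -/
theorem dln_bounded (n d : ℕ) (hn : 0 < n) (hd : 0 < d)
    (X : Matrix (Fin n) (Fin d) ℝ) (y : Fin n → ℝ)
    (M : Matrix (Fin d) (Fin d) ℝ) (r : Fin d → ℝ)
    (hM : M = Xᵀ * X) (hr : r = Xᵀ *ᵥ y)
    (hA1 : ∀ i, 0 < r i)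
    (hA2 : ∀ i j, i ≠ j → M i j ≤ 0)
    (C k : Fin d → ℝ) (hC : ∀ i, 0 < C i) (hk : ∀ i, 0 < k i) :
    ∃ B > (0 : ℝ), ∀ ε ∈ Set.Ioc (0 : ℝ) 1, ∀ θ : ℝ → Fin d → ℝ,
      (∀ i, θ 0 i = C i * ε ^ k i) →
      (∀ t ≥ (0 : ℝ), ∀ i,
        HasDerivAt (fun τ => θ τ i) (θ t i * (r i - (M *ᵥ θ t) i)) t) →
      ∀ t ≥ (0 : ℝ), Real.sqrt (∑ i, (θ t i) ^ 2) ≤ B := by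
  obtain ⟨lam, hlampos, hlam⟩ := quad_lower n d hd X y (hr ▸ hA1) (hM ▸ hA2)
  set A : ℝ := ∑ l, (∑ j, |X l j| * C j + |y l|)^2 with hA
  set Y : ℝ := ∑ l, (y l)^2 with hY
  have hAnn : 0 ≤ A := Finset.sum_nonneg fun l _ => sq_nonneg _
  have hYnn : 0 ≤ Y := Finset.sum_nonneg fun l _ => sq_nonneg _
  refine ⟨Real.sqrt ((2*A + 2*Y)/lam) + 1, by positivity, ?_⟩
  intro ε hε θ hθ0 hode t ht
  -- positivity of trajectories
  have hinit : ∀ i, 0 < θ 0 i := by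
    intro i
    rw [hθ0 i]
    exact mul_pos (hC i) (Real.rpow_pos_of_pos hε.1 _)
  have hpos := dln_pos d M r θ hinit hode
  -- the loss function
  set L : ℝ → ℝ := fun τ => ∑ l, (∑ j, X l j * θ τ j - y l)^2 with hL
  set D : ℝ → Fin d → ℝ := fun τ j => θ τ j * (r j - (M *ᵥ θ τ) j) with hD
  have hLderiv : ∀ τ ≥ (0:ℝ), HasDerivAt L
      (∑ l, 2 * (∑ j, X l j * θ τ j - y l) ^ 1 * (∑ j, X l j * D τ j)) τ := by
    intro τ hτ
    apply HasDerivAt.fun_sum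
    intro l _
    have hinner : HasDerivAt (fun s => ∑ j, X l j * θ s j - y l) (∑ j, X l j * D τ j) τ := by
      apply HasDerivAt.sub_const
      apply HasDerivAt.fun_sum
      intro j _
      exact (hode τ hτ j).const_mul (X l j)
    have := hinner.fun_pow 2
    simpa using this
  -- the derivative is nonpositive
  have hcol : ∀ τ, ∀ j, ∑ l, X l j * (∑ m, X l m * θ τ m - y l)
      = (M *ᵥ θ τ) j - r j := by
    intro τ j
    rw [hM, hr]
    simp only [Matrix.mulVec, dotProduct, Matrix.transpose_apply, Matrix.mul_apply,
      mul_sub, Finset.mul_sum, Finset.sum_sub_distrib, Finset.sum_mul]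
    congr 1
    rw [Finset.sum_comm]
    exact Finset.sum_congr rfl fun m _ => Finset.sum_congr rfl fun l _ => by ring
  have hderiv_nonpos : ∀ τ ≥ (0:ℝ),
      (∑ l, 2 * (∑ j, X l j * θ τ j - y l) ^ 1 * (∑ j, X l j * D τ j)) ≤ 0 := by
    intro τ hτ
    have heq : (∑ l, 2 * (∑ j, X l j * θ τ j - y l) ^ 1 * (∑ j, X l j * D τ j))
        = ∑ j, (-2) * (θ τ j) * (r j - (M *ᵥ θ τ) j)^2 := by
      have h1 : ∀ l, 2 * (∑ j, X l j * θ τ j - y l) ^ 1 * (∑ j, X l j * D τ j)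
          = ∑ j, (X l j * (∑ m, X l m * θ τ m - y l)) * (2 * D τ j) := by
        intro l
        rw [Finset.mul_sum, pow_one]
        ring_nf
      rw [Finset.sum_congr rfl fun l _ => h1 l, Finset.sum_comm]
      apply Finset.sum_congr rfl
      intro j _
      rw [← Finset.sum_mul, hcol τ j, hD]
      ring
    rw [heq]
    apply Finset.sum_nonpos
    intro j _
    have := (hpos τ hτ j).le
    nlinarith [sq_nonneg (r j - (M *ᵥ θ τ) j)]
  -- L is antitone on [0,∞)
  have hθcont : ∀ j, ContinuousOn (fun τ => θ τ j) (Ici 0) := by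
    intro j τ hτ
    exact ((hode τ hτ j).continuousAt).continuousWithinAt
  have hLanti : AntitoneOn L (Ici 0) := by
    apply antitoneOn_of_deriv_nonpos (convex_Ici 0)
    · apply continuousOn_finset_sum
      intro l _
      apply ContinuousOn.pow
      exact ContinuousOn.sub (continuousOn_finset_sum _ fun j _ =>
        continuousOn_const.mul (hθcont j)) continuousOn_const
    · intro x hx
      rw [interior_Ici] at hx
      exact (hLderiv x hx.le).differentiableAt.differentiableWithinAt
    · intro x hx
      rw [interior_Ici] at hx
      rw [(hLderiv x hx.le).deriv]
      exact hderiv_nonpos x hx.le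
  have hLt : L t ≤ L 0 := hLanti (self_mem_Ici) ht ht
  -- L 0 ≤ A
  have hL0 : L 0 ≤ A := by
    apply Finset.sum_le_sum
    intro l _
    have habs : |∑ j, X l j * θ 0 j - y l| ≤ ∑ j, |X l j| * C j + |y l| := by
      calc |∑ j, X l j * θ 0 j - y l| ≤ |∑ j, X l j * θ 0 j| + |y l| := abs_sub _ _
        _ ≤ (∑ j, |X l j * θ 0 j|) + |y l| := by
            gcongr; exact Finset.abs_sum_le_sum_abs _ _
        _ ≤ (∑ j, |X l j| * C j) + |y l| := by
            gcongr with j hj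
            rw [abs_mul]
            apply mul_le_mul_of_nonneg_left _ (abs_nonneg _)
            rw [abs_of_pos (hinit j), hθ0 j]
            calc C j * ε ^ k j ≤ C j * 1 :=
                  mul_le_mul_of_nonneg_left (Real.rpow_le_one hε.1.le hε.2 (hk j).le) (hC j).le
              _ = C j := mul_one _
    calc (∑ j, X l j * θ 0 j - y l)^2 = |∑ j, X l j * θ 0 j - y l|^2 := (sq_abs _).symm
      _ ≤ (∑ j, |X l j| * C j + |y l|)^2 := by
          apply pow_le_pow_left₀ (abs_nonneg _) habs
  -- putting it together
  have hXθ : ∑ l, (∑ j, X l j * θ t j)^2 ≤ 2 * A + 2 * Y := by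
    have h1 : ∀ l, (∑ j, X l j * θ t j)^2
        ≤ 2 * (∑ j, X l j * θ t j - y l)^2 + 2 * (y l)^2 := by
      intro l
      nlinarith [sq_nonneg (∑ j, X l j * θ t j - 2 * y l)]
    calc ∑ l, (∑ j, X l j * θ t j)^2
        ≤ ∑ l, (2 * (∑ j, X l j * θ t j - y l)^2 + 2 * (y l)^2) :=
          Finset.sum_le_sum fun l _ => h1 l
      _ = 2 * L t + 2 * Y := by rw [Finset.sum_add_distrib, ← Finset.mul_sum, ← Finset.mul_sum]
      _ ≤ 2 * A + 2 * Y := by linarith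
  have hsum : ∑ i, (θ t i)^2 ≤ (2*A + 2*Y)/lam := by
    rw [le_div_iff₀ hlampos]
    calc (∑ i, (θ t i)^2) * lam = lam * ∑ i, (θ t i)^2 := by ring
      _ ≤ ∑ l, (∑ j, X l j * θ t j)^2 := hlam _
      _ ≤ 2*A + 2*Y := hXθ
  calc Real.sqrt (∑ i, (θ t i)^2) ≤ Real.sqrt ((2*A + 2*Y)/lam) := Real.sqrt_le_sqrt hsum
    _ ≤ Real.sqrt ((2*A + 2*Y)/lam) + 1 := by linarith
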